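/- arXiv:2104.12630 — 2 statements merged into one kernel-verified Lean document; each statement's English description precedes it below -/
import Mathlib

section
/- Coercivity of the generative prior: Under the same assumptions, G : L^q(Ω) → [0,∞] is proper (G(0) = 0) and coercive: if ‖v_m‖_q → ∞ then G(v_m) → ∞. -/
open MeasureTheory Filter Topology Pointwise

/-- Integral of a function against a finite signed Radon measure. -/
noncomputable def sInt {d : ℕ} (μ : SignedMeasure (Fin d → ℝ)) (f : (Fin d → ℝ) → ℝ) : ℝ :=
  (∫ x, f x ∂μ.toJordanDecomposition.posPart) - ∫ x, f x ∂μ.toJordanDecomposition.negPart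

/-- Total variation (Radon) norm of a finite signed Radon measure. -/
noncomputable def Mnorm {d : ℕ} (μ : SignedMeasure (Fin d → ℝ)) : ℝ :=
  (μ.totalVariation Set.univ).toReal

/-- Pointwise convolution of a finite signed Radon measure with a function. -/
noncomputable def mconv {d : ℕ} (μ : SignedMeasure (Fin d → ℝ)) (g : (Fin d → ℝ) → ℝ) :
    (Fin d → ℝ) → ℝ := fun x => sInt μ (fun y => g (x - y))

/-- Recursively dilated domains: `Dom 0 = Ω`, `Dom (l+1) = Dom l − Σ`
(so `Dom l` plays the role of `Ω^l` in the paper). -/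
def Dom {d : ℕ} (Ω S : Set (Fin d → ℝ)) : ℕ → Set (Fin d → ℝ)
  | 0 => Ω
  | l + 1 => Dom Ω S l - S

/-- The space of latent variables: `μ l n` is the `n`-th latent measure of layer `l`. -/
abbrev LatV (d : ℕ) := ℕ → ℕ → MeasureTheory.SignedMeasure (Fin d → ℝ)

/-- The space of filter kernels: `θ l n k` is the kernel attached to edge `(n,k)` of layer `l`. -/
abbrev KerV (d : ℕ) := ℕ → ℕ → ℕ → (Fin d → ℝ) → ℝ

/-- The layer convolution `(μ^l *_l θ^l)_k = Σ_{(n,k) ∈ E^l} μ^l_n * θ^l_{n,k}`. -/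
noncomputable def layerConv {d : ℕ} (E : ℕ → Finset (ℕ × ℕ)) (μ : LatV d) (θ : KerV d)
    (l k : ℕ) : (Fin d → ℝ) → ℝ :=
  fun x => ∑ p ∈ (E l).filter (fun p => p.2 = k), mconv (μ l p.1) (θ l p.1 p.2) x

/-- The feasible set `F(v)` of the generative prior: `v = μ¹ *₁ θ¹` (a.e. on `Ω`), the latent
measures of layer `l` live on `Ω^l`, the kernels belong to the unit ball of `L²(Σ)`, and the
additional linear constraint `Zθ = 0` holds. -/
def Feasible {d : ℕ} (Ω S : Set (Fin d → ℝ)) (L : ℕ) (N : ℕ → ℕ)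
    (E : ℕ → Finset (ℕ × ℕ)) {Nc : ℕ} (Z : KerV d →ₗ[ℝ] (Fin Nc → ℝ))
    (v : (Fin d → ℝ) → ℝ) (μ : LatV d) (θ : KerV d) : Prop :=
  (v =ᵐ[volume.restrict Ω] layerConv E μ θ 1 0) ∧
  (∀ l ∈ Finset.Icc 1 L, ∀ n < N l, (μ l n).totalVariation (Dom Ω S l)ᶜ = 0) ∧
  (∀ l n k, MemLp (θ l n k) 2 (volume.restrict S) ∧ (∀ x ∉ S, θ l n k x = 0) ∧
    eLpNorm (θ l n k) 2 (volume.restrict S) ≤ 1) ∧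
  Z θ = 0

/-- The cost `G(μ,θ) = ‖μ‖_M + Σ_{l=2}^L J_{l−1}(μ^{l−1} − μ^l *_l θ^l)`, the convolution
output being identified with a signed measure on `Ω^{l−1}` via integration. -/
noncomputable def Gcost {d : ℕ} (Ω S : Set (Fin d → ℝ)) (L : ℕ) (N : ℕ → ℕ)
    (E : ℕ → Finset (ℕ × ℕ))
    (J : ℕ → (ℕ → MeasureTheory.SignedMeasure (Fin d → ℝ)) → ENNReal)
    (μ : LatV d) (θ : KerV d) : ENNReal :=
  (∑ l ∈ Finset.Icc 1 L, ∑ n ∈ Finset.range (N l), ENNReal.ofReal (Mnorm (μ l n))) +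
  ∑ l ∈ Finset.Icc 2 L, J (l - 1) (fun n =>
    μ (l - 1) n - (volume.restrict (Dom Ω S (l - 1))).withDensityᵥ (layerConv E μ θ l n))

/-- The generative prior `G(v) = inf_{(μ,θ) ∈ F(v)} G(μ,θ)` (with value `∞` if `F(v) = ∅`). -/
noncomputable def GenPrior {d : ℕ} (Ω S : Set (Fin d → ℝ)) (L : ℕ) (N : ℕ → ℕ)
    (E : ℕ → Finset (ℕ × ℕ)) {Nc : ℕ} (Z : KerV d →ₗ[ℝ] (Fin Nc → ℝ))
    (J : ℕ → (ℕ → MeasureTheory.SignedMeasure (Fin d → ℝ)) → ENNReal)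
    (v : (Fin d → ℝ) → ℝ) : ENNReal :=
  ⨅ (μ : LatV d) (θ : KerV d) (_ : Feasible Ω S L N E Z v μ θ), Gcost Ω S L N E J μ θ


open scoped ENNReal NNReal

open MeasureTheory Filter Topology Pointwise

instance totalVariation_isFiniteMeasure {α : Type*} [MeasurableSpace α]
    (μ : MeasureTheory.SignedMeasure α) : IsFiniteMeasure μ.totalVariation := by
  rw [SignedMeasure.totalVariation]; infer_instance

/-- Minkowski inequality for finite sums of `ℝ≥0∞`-valued functions. -/
lemma aux_lp_sum_le {α : Type*} [MeasurableSpace α] (μ : Measure α) {ι : Type*}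
    (T : Finset ι) (H : ι → α → ℝ≥0∞) (hH : ∀ i, Measurable (H i)) {q : ℝ} (hq : 1 ≤ q) :
    (∫⁻ x, (∑ i ∈ T, H i x) ^ q ∂μ) ^ (1/q) ≤ ∑ i ∈ T, (∫⁻ x, H i x ^ q ∂μ) ^ (1/q) := by
  classical
  induction T using Finset.induction_on with
  | empty =>
      have hq0 : (0:ℝ) < q := lt_of_lt_of_le zero_lt_one hq
      simp only [Finset.sum_empty, ENNReal.zero_rpow_of_pos hq0, lintegral_zero,
        ENNReal.zero_rpow_of_pos (show (0:ℝ) < 1/q by positivity), le_refl]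
  | @insert a s ha ih =>
      have hsum : Measurable fun x => ∑ i ∈ s, H i x :=
        Finset.measurable_sum s (fun i _ => hH i)
      have h := ENNReal.lintegral_Lp_add_le (μ := μ) (hH a).aemeasurable
        hsum.aemeasurable hq
      simp only [Pi.add_apply] at h
      simp_rw [Finset.sum_insert ha]
      exact h.trans (add_le_add_right ih _)

/-- A measurable representative (w.r.t. volume) of a kernel supported in `S`. -/
lemma aux_rep {d : ℕ} {S : Set (Fin d → ℝ)} (hS : MeasurableSet S)
    {θ : (Fin d → ℝ) → ℝ} (hm : AEStronglyMeasurable θ (volume.restrict S))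
    (h0 : ∀ x ∉ S, θ x = 0) :
    ∃ g : (Fin d → ℝ) → ℝ, Measurable g ∧ θ =ᵐ[volume] g := by
  refine ⟨S.indicator (AEStronglyMeasurable.mk θ hm), ((AEStronglyMeasurable.stronglyMeasurable_mk hm).measurable).indicator hS, ?_⟩
  have h1 : ∀ᵐ x ∂(volume : Measure (Fin d → ℝ)), x ∈ S → θ x = (AEStronglyMeasurable.mk θ hm) x :=
    (ae_restrict_iff' hS).mp (AEStronglyMeasurable.ae_eq_mk hm)
  filter_upwards [h1] with x hx
  by_cases hxS : x ∈ S
  · rw [Set.indicator_of_mem hxS]; exact hx hxS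
  · rw [Set.indicator_of_notMem hxS]; exact h0 x hxS

/-- For a.e. `x`, replacing a kernel by its measurable representative does not change
the convolution-type lintegral against a finite measure. -/
lemma aux_ae_shift_congr {d : ℕ} (ν : Measure (Fin d → ℝ)) [IsFiniteMeasure ν]
    {θ g : (Fin d → ℝ) → ℝ} (hθg : θ =ᵐ[volume] g) :
    ∀ᵐ x ∂(volume : Measure (Fin d → ℝ)),
      (∫⁻ y, (‖θ (x - y)‖₊ : ℝ≥0∞) ∂ν) = ∫⁻ y, (‖g (x - y)‖₊ : ℝ≥0∞) ∂ν := by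
  obtain ⟨N, hNsub, hNm, hN0⟩ := exists_measurable_superset_of_null (ae_iff.mp hθg)
  have hjm : Measurable (Function.uncurry fun (x y : Fin d → ℝ) =>
      N.indicator (fun _ => (1:ℝ≥0∞)) (x - y)) :=
    (measurable_one.indicator hNm).comp (measurable_fst.sub measurable_snd)
  have key : (∫⁻ x, ∫⁻ y, N.indicator (fun _ => (1:ℝ≥0∞)) (x - y) ∂ν ∂volume) = 0 := by
    rw [lintegral_lintegral_swap hjm.aemeasurable]
    have hz : ∀ y : Fin d → ℝ,
        (∫⁻ x, N.indicator (fun _ => (1:ℝ≥0∞)) (x - y) ∂volume) = 0 := by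
      intro y
      rw [lintegral_sub_right_eq_self (fun x => N.indicator (fun _ => (1:ℝ≥0∞)) x) y,
        lintegral_indicator hNm]
      simp [hN0]
    simp [hz]
  have hφm : Measurable fun x => ∫⁻ y, N.indicator (fun _ => (1:ℝ≥0∞)) (x - y) ∂ν :=
    Measurable.lintegral_prod_right hjm
  have h0 : ∀ᵐ x ∂(volume : Measure (Fin d → ℝ)),
      (∫⁻ y, N.indicator (fun _ => (1:ℝ≥0∞)) (x - y) ∂ν) = 0 :=
    (lintegral_eq_zero_iff hφm).mp key
  filter_upwards [h0] with x hx
  have hxm : Measurable fun y : Fin d → ℝ => N.indicator (fun _ => (1:ℝ≥0∞)) (x - y) :=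
    (measurable_one.indicator hNm).comp (measurable_const.sub measurable_id)
  have hae : ∀ᵐ y ∂ν, N.indicator (fun _ => (1:ℝ≥0∞)) (x - y) = 0 :=
    (lintegral_eq_zero_iff hxm).mp hx
  refine lintegral_congr_ae ?_
  filter_upwards [hae] with y hy
  have hxy : x - y ∉ N := by
    by_contra h
    rw [Set.indicator_of_mem h] at hy
    exact one_ne_zero hy
  have : θ (x - y) = g (x - y) := by
    by_contra h
    exact hxy (hNsub h)
  rw [this]

/-- Pointwise bound of the measure convolution by the lintegral against total variation. -/
lemma aux_mconv_bound {d : ℕ} (μ : SignedMeasure (Fin d → ℝ)) (θ : (Fin d → ℝ) → ℝ)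
    (x : Fin d → ℝ) :
    (‖mconv μ θ x‖₊ : ℝ≥0∞) ≤ ∫⁻ y, (‖θ (x - y)‖₊ : ℝ≥0∞) ∂μ.totalVariation := by
  rw [SignedMeasure.totalVariation, lintegral_add_measure]
  refine le_trans ?_ (add_le_add (enorm_integral_le_lintegral_enorm _)
    (enorm_integral_le_lintegral_enorm _))
  rw [mconv, sInt]
  calc (‖(∫ y, θ (x - y) ∂μ.toJordanDecomposition.posPart) -
        ∫ y, θ (x - y) ∂μ.toJordanDecomposition.negPart‖₊ : ℝ≥0∞)
      ≤ (‖∫ y, θ (x - y) ∂μ.toJordanDecomposition.posPart‖₊ : ℝ≥0∞) +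
        (‖∫ y, θ (x - y) ∂μ.toJordanDecomposition.negPart‖₊ : ℝ≥0∞) := by
        rw [← ENNReal.coe_add]
        exact_mod_cast nnnorm_sub_le _ _

/-- Core estimate: the `L^q(Ω)` norm of the convolution-type majorant is bounded by
`C(S,q) * ν(univ)`. -/
lemma aux_core {d : ℕ} {q : ℝ} (hq1 : 1 < q) (hq2 : q ≤ 2) {S : Set (Fin d → ℝ)}
    (hS : MeasurableSet S) (Ω : Set (Fin d → ℝ)) (ν : Measure (Fin d → ℝ)) [IsFiniteMeasure ν]
    {θ g : (Fin d → ℝ) → ℝ} (hg : Measurable g) (hθg : θ =ᵐ[volume] g)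
    (hθ0 : ∀ x ∉ S, θ x = 0)
    (hθ1 : eLpNorm θ 2 (volume.restrict S) ≤ 1) :
    (∫⁻ x in Ω, (∫⁻ y, (‖g (x - y)‖₊ : ℝ≥0∞) ∂ν) ^ q ∂volume) ^ (1/q)
      ≤ ((volume S + 1) ^ (1 - q/2)) ^ (1/q) * ν Set.univ := by
  have hq0 : (0:ℝ) < q := by linarith
  have hqne : q ≠ 0 := ne_of_gt hq0
  set Kb : ℝ≥0∞ := (volume S + 1) ^ (1 - q/2) with hKb
  -- Step 1 : ∫ ‖g‖^q ≤ Kb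
  have hI2 : (∫⁻ z in S, (‖θ z‖₊ : ℝ≥0∞) ^ (2:ℝ) ∂volume) ≤ 1 := by
    have h2 : eLpNorm θ 2 (volume.restrict S)
        = (∫⁻ z in S, (‖θ z‖₊ : ℝ≥0∞) ^ (2:ℝ) ∂volume) ^ (1/(2:ℝ)) := by
      rw [eLpNorm_eq_lintegral_rpow_enorm_toReal (by norm_num) (by norm_num)]
      norm_num
      rfl
    calc (∫⁻ z in S, (‖θ z‖₊ : ℝ≥0∞) ^ (2:ℝ) ∂volume)
        = ((∫⁻ z in S, (‖θ z‖₊ : ℝ≥0∞) ^ (2:ℝ) ∂volume) ^ (1/(2:ℝ))) ^ (2:ℝ) := by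
          rw [← ENNReal.rpow_mul]; norm_num
      _ ≤ 1 ^ (2:ℝ) := ENNReal.rpow_le_rpow (h2 ▸ hθ1) (by norm_num)
      _ = 1 := ENNReal.one_rpow _
  have hKθ : (∫⁻ z, (‖g z‖₊ : ℝ≥0∞) ^ q ∂volume)
      = ∫⁻ z in S, (‖θ z‖₊ : ℝ≥0∞) ^ q ∂volume := by
    have h1 : (∫⁻ z, (‖g z‖₊ : ℝ≥0∞) ^ q ∂volume)
        = ∫⁻ z, (‖θ z‖₊ : ℝ≥0∞) ^ q ∂volume :=
      lintegral_congr_ae (hθg.mono fun z hz => by simp only [hz])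
    have h2 : (∫⁻ z, (‖θ z‖₊ : ℝ≥0∞) ^ q ∂volume)
        = ∫⁻ z, S.indicator (fun z => (‖θ z‖₊ : ℝ≥0∞) ^ q) z ∂volume := by
      refine lintegral_congr fun z => ?_
      by_cases hz : z ∈ S
      · rw [Set.indicator_of_mem hz]
      · rw [Set.indicator_of_notMem hz, hθ0 z hz]
        simp [ENNReal.zero_rpow_of_pos hq0]
    rw [h1, h2, lintegral_indicator hS]
  have hK : (∫⁻ z, (‖g z‖₊ : ℝ≥0∞) ^ q ∂volume) ≤ Kb := by
    rcases eq_or_lt_of_le hq2 with hq2e | hq2l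
    · rw [hKθ, hq2e]
      calc (∫⁻ z in S, (‖θ z‖₊ : ℝ≥0∞) ^ (2:ℝ) ∂volume) ≤ 1 := hI2
        _ ≤ Kb := by
            rw [hKb, hq2e]
            norm_num
    · -- q < 2 : Hölder with exponents 2/q and its conjugate
      have hp1 : 1 < 2/q := (one_lt_div hq0).mpr hq2l
      have hpq : (2/q).HolderConjugate (Real.conjExponent (2/q)) :=
        Real.HolderConjugate.conjExponent hp1
      have hθm : AEMeasurable (fun z => (‖θ z‖₊ : ℝ≥0∞) ^ q) (volume.restrict S) := by
        have : AEMeasurable θ (volume.restrict S) :=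
          hg.aemeasurable.congr (ae_restrict_of_ae hθg.symm)
        exact (this.nnnorm.coe_nnreal_ennreal).pow aemeasurable_const
      have hhold := ENNReal.lintegral_mul_le_Lp_mul_Lq (volume.restrict S) hpq hθm
        (aemeasurable_const (b := (1:ℝ≥0∞)))
      simp only [Pi.mul_apply, mul_one, ENNReal.one_rpow, lintegral_one,
        Measure.restrict_apply_univ] at hhold
      have hpow : ∀ z, ((‖θ z‖₊ : ℝ≥0∞) ^ q) ^ (2/q) = (‖θ z‖₊ : ℝ≥0∞) ^ (2:ℝ) := by
        intro z
        rw [← ENNReal.rpow_mul]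
        congr 1
        field_simp
      simp only [hpow] at hhold
      have hconj : 1 / Real.conjExponent (2/q) = 1 - q/2 := by
        have hinv := hpq.inv_add_inv_eq_one
        rw [one_div]
        have h12 : (2/q)⁻¹ = q/2 := by rw [inv_div]
        linarith
      calc (∫⁻ z, (‖g z‖₊ : ℝ≥0∞) ^ q ∂volume)
          = ∫⁻ z in S, (‖θ z‖₊ : ℝ≥0∞) ^ q ∂volume := hKθ
        _ ≤ (∫⁻ z in S, (‖θ z‖₊ : ℝ≥0∞) ^ (2:ℝ) ∂volume) ^ (1/(2/q))
            * (volume S) ^ (1 / Real.conjExponent (2/q)) := hhold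
        _ ≤ 1 * (volume S + 1) ^ (1 - q/2) := by
            refine mul_le_mul' (ENNReal.rpow_le_one hI2 (by positivity)) ?_
            rw [hconj]
            exact ENNReal.rpow_le_rpow le_self_add (by linarith)
        _ = Kb := by rw [one_mul]
  -- Step 2 : inner Hölder in y
  set c : ℝ≥0∞ := ν Set.univ with hc
  have hpq : q.HolderConjugate (Real.conjExponent q) := Real.HolderConjugate.conjExponent hq1
  have hexp : (1 / Real.conjExponent q) * q = q - 1 := by
    have hinv := hpq.inv_add_inv_eq_one
    rw [one_div]
    have h1 : (Real.conjExponent q)⁻¹ = 1 - q⁻¹ := by linarith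
    rw [h1, sub_mul, one_mul, inv_mul_cancel₀ hqne]
  have hgm : ∀ x : Fin d → ℝ, Measurable fun y => (‖g (x - y)‖₊ : ℝ≥0∞) := by
    intro x
    exact ((hg.comp (measurable_const.sub measurable_id)).nnnorm).coe_nnreal_ennreal
  have hHx : ∀ x : Fin d → ℝ,
      (∫⁻ y, (‖g (x - y)‖₊ : ℝ≥0∞) ∂ν) ^ q
        ≤ (∫⁻ y, (‖g (x - y)‖₊ : ℝ≥0∞) ^ q ∂ν) * c ^ (q - 1) := by
    intro x
    have h := ENNReal.lintegral_mul_le_Lp_mul_Lq ν hpq (hgm x).aemeasurable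
      (aemeasurable_const (b := (1:ℝ≥0∞)))
    simp only [Pi.mul_apply, mul_one, ENNReal.one_rpow, lintegral_one] at h
    calc (∫⁻ y, (‖g (x - y)‖₊ : ℝ≥0∞) ∂ν) ^ q
        ≤ ((∫⁻ y, (‖g (x - y)‖₊ : ℝ≥0∞) ^ q ∂ν) ^ (1/q) * c ^ (1/Real.conjExponent q)) ^ q :=
          ENNReal.rpow_le_rpow h hq0.le
      _ = (∫⁻ y, (‖g (x - y)‖₊ : ℝ≥0∞) ^ q ∂ν) * c ^ (q - 1) := by
          rw [ENNReal.mul_rpow_of_nonneg _ _ hq0.le, ← ENNReal.rpow_mul, ← ENNReal.rpow_mul,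
            one_div, inv_mul_cancel₀ hqne, ENNReal.rpow_one, hexp]
  -- Step 3 : Fubini and translation invariance
  have hjoint : Measurable (Function.uncurry fun (x y : Fin d → ℝ) =>
      (‖g (x - y)‖₊ : ℝ≥0∞) ^ q) :=
    (((hg.comp (measurable_fst.sub measurable_snd)).nnnorm).coe_nnreal_ennreal).pow
      measurable_const
  have hB : Measurable fun x : Fin d → ℝ => ∫⁻ y, (‖g (x - y)‖₊ : ℝ≥0∞) ^ q ∂ν :=
    Measurable.lintegral_prod_right hjoint
  have hfub : (∫⁻ x, ∫⁻ y, (‖g (x - y)‖₊ : ℝ≥0∞) ^ q ∂ν ∂volume) ≤ Kb * c := by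
    rw [lintegral_lintegral_swap hjoint.aemeasurable]
    have htrans : ∀ y : Fin d → ℝ,
        (∫⁻ x, (‖g (x - y)‖₊ : ℝ≥0∞) ^ q ∂volume) = ∫⁻ z, (‖g z‖₊ : ℝ≥0∞) ^ q ∂volume :=
      fun y => lintegral_sub_right_eq_self (fun z => (‖g z‖₊ : ℝ≥0∞) ^ q) y
    calc (∫⁻ y, ∫⁻ x, (‖g (x - y)‖₊ : ℝ≥0∞) ^ q ∂volume ∂ν)
        = ∫⁻ _, (∫⁻ z, (‖g z‖₊ : ℝ≥0∞) ^ q ∂volume) ∂ν := lintegral_congr htrans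
      _ = (∫⁻ z, (‖g z‖₊ : ℝ≥0∞) ^ q ∂volume) * c := lintegral_const _
      _ ≤ Kb * c := mul_le_mul_left hK _
  -- Put everything together
  calc (∫⁻ x in Ω, (∫⁻ y, (‖g (x - y)‖₊ : ℝ≥0∞) ∂ν) ^ q ∂volume) ^ (1/q)
      ≤ ((∫⁻ x in Ω, (∫⁻ y, (‖g (x - y)‖₊ : ℝ≥0∞) ^ q ∂ν) ∂volume) * c ^ (q-1)) ^ (1/q) := by
        refine ENNReal.rpow_le_rpow ?_ (by positivity)
        calc (∫⁻ x in Ω, (∫⁻ y, (‖g (x - y)‖₊ : ℝ≥0∞) ∂ν) ^ q ∂volume)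
            ≤ ∫⁻ x in Ω, (∫⁻ y, (‖g (x - y)‖₊ : ℝ≥0∞) ^ q ∂ν) * c ^ (q-1) ∂volume :=
              lintegral_mono fun x => hHx x
          _ = (∫⁻ x in Ω, (∫⁻ y, (‖g (x - y)‖₊ : ℝ≥0∞) ^ q ∂ν) ∂volume) * c ^ (q-1) :=
              lintegral_mul_const _ hB
    _ ≤ ((Kb * c) * c ^ (q-1)) ^ (1/q) := by
        refine ENNReal.rpow_le_rpow (mul_le_mul_left ?_ _) (by positivity)
        refine le_trans (lintegral_mono' Measure.restrict_le_self le_rfl) hfub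
    _ = (Kb * c ^ q) ^ (1/q) := by
        rw [mul_assoc]
        congr 1
        have : c * c ^ (q-1) = c ^ (1:ℝ) * c ^ (q-1) := by rw [ENNReal.rpow_one]
        rw [this, ← ENNReal.rpow_add_of_nonneg _ _ zero_le_one (by linarith)]
        congr 1
        ring_nf
    _ = Kb ^ (1/q) * c := by
        rw [ENNReal.mul_rpow_of_nonneg _ _ (by positivity)]
        congr 1
        rw [← ENNReal.rpow_mul, mul_one_div_cancel hqne, ENNReal.rpow_one]

/-- The key coercivity estimate: for any feasible point, the `L^q(Ω)` norm of `v` is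
controlled by the total-variation norms of the first-layer latent measures. -/
lemma aux_feasible_bound {d : ℕ} (Ω S : Set (Fin d → ℝ)) (hSo : IsOpen S)
    (L : ℕ) (hL : 1 ≤ L) (N : ℕ → ℕ) (E : ℕ → Finset (ℕ × ℕ))
    (hErange : ∀ l ∈ Finset.Icc 1 L, ∀ p ∈ E l, p.1 < N l ∧ p.2 < N (l - 1))
    {Nc : ℕ} (Z : KerV d →ₗ[ℝ] (Fin Nc → ℝ))
    {q : ℝ} (hq1 : 1 < q) (hq2 : q ≤ 2)
    {v : (Fin d → ℝ) → ℝ} {μ : LatV d} {θ : KerV d}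
    (hfeas : Feasible Ω S L N E Z v μ θ) :
    eLpNorm v (ENNReal.ofReal q) (volume.restrict Ω) ≤
      ((volume S + 1) ^ (1 - q/2)) ^ (1/q) *
        ∑ n ∈ Finset.range (N 1), ENNReal.ofReal (Mnorm (μ 1 n)) := by
  classical
  have hq0 : (0:ℝ) < q := by linarith
  obtain ⟨hv, hsupp, hθ, hZc⟩ := hfeas
  set C : ℝ≥0∞ := ((volume S + 1) ^ (1 - q/2)) ^ (1/q) with hC
  set T : Finset (ℕ × ℕ) := (E 1).filter (fun p => p.2 = 0) with hT
  -- measurable representatives of the first-layer kernels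
  have hrep : ∀ p : ℕ × ℕ, ∃ g : (Fin d → ℝ) → ℝ, Measurable g ∧ θ 1 p.1 p.2 =ᵐ[volume] g :=
    fun p => aux_rep hSo.measurableSet (hθ 1 p.1 p.2).1.aestronglyMeasurable (hθ 1 p.1 p.2).2.1
  choose g hgm hgae using hrep
  set H : ℕ × ℕ → (Fin d → ℝ) → ℝ≥0∞ :=
    fun p x => ∫⁻ y, (‖g p (x - y)‖₊ : ℝ≥0∞) ∂(μ 1 p.1).totalVariation with hH
  have hHm : ∀ p, Measurable (H p) := by
    intro p
    exact Measurable.lintegral_prod_right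
      (((hgm p).comp (measurable_fst.sub measurable_snd)).nnnorm).coe_nnreal_ennreal
  -- a.e. pointwise domination
  have hae : ∀ᵐ x ∂(volume : Measure (Fin d → ℝ)), ∀ p ∈ T,
      (∫⁻ y, (‖θ 1 p.1 p.2 (x - y)‖₊ : ℝ≥0∞) ∂(μ 1 p.1).totalVariation) = H p x := by
    rw [Filter.eventually_all_finset]
    intro p _
    exact aux_ae_shift_congr _ (hgae p)
  have hdom : ∀ᵐ x ∂(volume.restrict Ω),
      (‖layerConv E μ θ 1 0 x‖₊ : ℝ≥0∞) ≤ ∑ p ∈ T, H p x := by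
    refine ae_restrict_of_ae (hae.mono fun x hx => ?_)
    calc (‖layerConv E μ θ 1 0 x‖₊ : ℝ≥0∞)
        ≤ ∑ p ∈ T, (‖mconv (μ 1 p.1) (θ 1 p.1 p.2) x‖₊ : ℝ≥0∞) := by
          rw [layerConv, ← hT, ← ENNReal.coe_finset_sum]
          exact_mod_cast nnnorm_sum_le _ _
      _ ≤ ∑ p ∈ T, H p x := by
          refine Finset.sum_le_sum fun p hp => ?_
          exact le_of_le_of_eq (aux_mconv_bound (μ 1 p.1) (θ 1 p.1 p.2) x) (hx p hp)
  -- the L^q norm computation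
  have hqoR : (ENNReal.ofReal q).toReal = q := ENNReal.toReal_ofReal hq0.le
  rw [eLpNorm_congr_ae hv,
    eLpNorm_eq_lintegral_rpow_enorm_toReal (by simpa using hq0) ENNReal.ofReal_ne_top, hqoR]
  calc (∫⁻ x in Ω, (‖layerConv E μ θ 1 0 x‖₊ : ℝ≥0∞) ^ q ∂volume) ^ (1/q)
      ≤ (∫⁻ x in Ω, (∑ p ∈ T, H p x) ^ q ∂volume) ^ (1/q) := by
        refine ENNReal.rpow_le_rpow (lintegral_mono_ae (hdom.mono fun x hx => ?_))
          (by positivity)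
        exact ENNReal.rpow_le_rpow hx hq0.le
    _ ≤ ∑ p ∈ T, (∫⁻ x in Ω, H p x ^ q ∂volume) ^ (1/q) :=
        aux_lp_sum_le _ T H hHm hq1.le
    _ ≤ ∑ p ∈ T, C * (μ 1 p.1).totalVariation Set.univ := by
        refine Finset.sum_le_sum fun p _ => ?_
        have := aux_core hq1 hq2 hSo.measurableSet Ω ((μ 1 p.1).totalVariation)
          (hgm p) (hgae p) (hθ 1 p.1 p.2).2.1 (hθ 1 p.1 p.2).2.2
        exact this
    _ = C * ∑ p ∈ T, ENNReal.ofReal (Mnorm (μ 1 p.1)) := by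
        rw [← Finset.mul_sum]
        congr 1
        refine Finset.sum_congr rfl fun p _ => ?_
        rw [Mnorm, ENNReal.ofReal_toReal (measure_ne_top _ _)]
    _ ≤ C * ∑ n ∈ Finset.range (N 1), ENNReal.ofReal (Mnorm (μ 1 n)) := by
        refine mul_le_mul_right ?_ _
        have hinj : ∀ x ∈ T, ∀ y ∈ T, x.1 = y.1 → x = y := by
          intro x hx y hy hxy
          have hx2 := (Finset.mem_filter.mp hx).2
          have hy2 := (Finset.mem_filter.mp hy).2
          exact Prod.ext hxy (hx2.trans hy2.symm)
        have himg := Finset.sum_image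
          (f := fun n => ENNReal.ofReal (Mnorm (μ 1 n))) (g := Prod.fst) hinj
        rw [← himg]
        refine Finset.sum_le_sum_of_subset ?_
        intro n hn
        obtain ⟨p, hp, rfl⟩ := Finset.mem_image.mp hn
        have hpE : p ∈ E 1 := (Finset.mem_filter.mp hp).1
        exact Finset.mem_range.mpr
          (hErange 1 (Finset.mem_Icc.mpr ⟨le_refl 1, hL⟩) p hpE).1

/-- The generative prior is proper (`G(0) = 0`) and coercive on `L^q(Ω)`:
`‖v_m‖_q → ∞` implies `G(v_m) → ∞` (Lemma 2.6). -/
theorem stmt_10 {d : ℕ} (Ω S : Set (Fin d → ℝ))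
    (hΩo : IsOpen Ω) (hΩb : Bornology.IsBounded Ω)
    (hSo : IsOpen S) (hSb : Bornology.IsBounded S) (h0S : (0 : Fin d → ℝ) ∈ S)
    (L : ℕ) (hL : 1 ≤ L) (N : ℕ → ℕ) (hN0 : N 0 = 1)
    (E : ℕ → Finset (ℕ × ℕ))
    (hErange : ∀ l ∈ Finset.Icc 1 L, ∀ p ∈ E l, p.1 < N l ∧ p.2 < N (l - 1))
    (hEconn : ∀ l ∈ Finset.Icc 1 L, ∀ n < N l, ∃ k < N (l - 1), (n, k) ∈ E l)
    {Nc : ℕ} (Z : KerV d →ₗ[ℝ] (Fin Nc → ℝ))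
    -- Z is weak-to-weak sequentially continuous (equivalently, bounded linear)
    (hZ : ∀ (θm : ℕ → KerV d) (θ : KerV d),
      (∀ l n k, ∀ ψ : (Fin d → ℝ) → ℝ, MemLp ψ 2 (volume.restrict S) →
        Tendsto (fun m => ∫ x in S, θm m l n k x * ψ x) atTop
          (𝓝 (∫ x in S, θ l n k x * ψ x))) →
      Tendsto (fun m => Z (θm m)) atTop (𝓝 (Z θ)))
    (J : ℕ → (ℕ → MeasureTheory.SignedMeasure (Fin d → ℝ)) → ENNReal)
    -- J_l(0) = 0
    (hJ0 : ∀ l, J l (fun _ => 0) = 0)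
    -- each J_l is sequentially weak* lower semicontinuous on M(Ω^l)^{N_l}
    (hJlsc : ∀ l ∈ Finset.Icc 1 L,
      ∀ (νm : ℕ → ℕ → MeasureTheory.SignedMeasure (Fin d → ℝ))
        (ν : ℕ → MeasureTheory.SignedMeasure (Fin d → ℝ)),
      (∀ (n : ℕ) (φ : (Fin d → ℝ) → ℝ), Continuous φ → (∀ x ∉ Dom Ω S l, φ x = 0) →
        Tendsto (fun m => sInt (νm m n) φ) atTop (𝓝 (sInt (ν n) φ))) →
      J l ν ≤ Filter.liminf (fun m => J l (νm m)) atTop)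
    (q : ℝ) (hq1 : 1 < q) (hq2 : q ≤ 2)
    :
    GenPrior Ω S L N E Z J (0 : (Fin d → ℝ) → ℝ) = 0 ∧
    ∀ v : ℕ → (Fin d → ℝ) → ℝ,
      (∀ m, MemLp (v m) (ENNReal.ofReal q) (volume.restrict Ω)) →
      Tendsto (fun m => (eLpNorm (v m) (ENNReal.ofReal q) (volume.restrict Ω)).toReal)
        atTop atTop →
      Tendsto (fun m => GenPrior Ω S L N E Z J (v m)) atTop (𝓝 ⊤) := by

  have hq0 : (0:ℝ) < q := by linarith
  have hlc0 : ∀ l k, layerConv E (fun _ _ => 0) (fun _ _ _ _ => 0) l k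
      = (0 : (Fin d → ℝ) → ℝ) := by
    intro l k
    funext x
    simp [layerConv, mconv, sInt, SignedMeasure.toJordanDecomposition_zero]
  constructor
  · -- G(0) = 0
    refine le_antisymm ?_ (zero_le)
    have hfeas0 : Feasible Ω S L N E Z (0 : (Fin d → ℝ) → ℝ)
        (fun _ _ => 0) (fun _ _ _ _ => 0) := by
      refine ⟨?_, ?_, ?_, ?_⟩
      · rw [hlc0]
      · intro l _ n _
        simp [SignedMeasure.totalVariation_zero]
      · intro l n k
        refine ⟨MemLp.zero', fun x _ => rfl, ?_⟩
        rw [eLpNorm_zero']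
        exact zero_le_one
      · exact map_zero Z
    have hle : GenPrior Ω S L N E Z J (0 : (Fin d → ℝ) → ℝ)
        ≤ Gcost Ω S L N E J (fun _ _ => 0) (fun _ _ _ _ => 0) := by
      rw [GenPrior]
      exact iInf_le_of_le (fun _ _ => 0) (iInf_le_of_le (fun _ _ _ _ => 0)
        (iInf_le_of_le hfeas0 le_rfl))
    refine le_trans hle (le_of_eq ?_)
    rw [Gcost]
    have hsum1 : (∑ l ∈ Finset.Icc 1 L, ∑ n ∈ Finset.range (N l),
        ENNReal.ofReal (Mnorm ((fun _ _ => (0 : SignedMeasure (Fin d → ℝ))) l n))) = 0 := by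
      refine Finset.sum_eq_zero fun l _ => Finset.sum_eq_zero fun n _ => ?_
      simp [Mnorm, SignedMeasure.totalVariation_zero]
    have hsum2 : (∑ l ∈ Finset.Icc 2 L, J (l - 1) (fun n =>
        (fun _ _ => (0 : SignedMeasure (Fin d → ℝ))) (l - 1) n -
          (volume.restrict (Dom Ω S (l - 1))).withDensityᵥ
            (layerConv E (fun _ _ => 0) (fun _ _ _ _ => 0) l n))) = 0 := by
      refine Finset.sum_eq_zero fun l _ => ?_
      have heq : (fun n => (fun _ _ => (0 : SignedMeasure (Fin d → ℝ))) (l - 1) n -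
          (volume.restrict (Dom Ω S (l - 1))).withDensityᵥ
            (layerConv E (fun _ _ => 0) (fun _ _ _ _ => 0) l n))
          = fun _ => (0 : SignedMeasure (Fin d → ℝ)) := by
        funext n
        rw [hlc0 l n, withDensityᵥ_zero, sub_zero]
      rw [heq, hJ0]
    rw [hsum1, hsum2, add_zero]
  · -- coercivity
    intro v hvmem hvnorm
    set C : ℝ≥0∞ := ((volume S + 1) ^ (1 - q/2)) ^ (1/q) with hC
    have hSvol : volume S ≠ ⊤ := hSb.measure_lt_top.ne
    have hbase : (volume S + 1 : ℝ≥0∞) ≠ ⊤ := by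
      simp [ENNReal.add_ne_top, hSvol]
    have hCtop : C ≠ ⊤ := by
      refine (ENNReal.rpow_lt_top_of_nonneg (by positivity) ?_).ne
      exact (ENNReal.rpow_lt_top_of_nonneg (by linarith) hbase).ne
    have hC1 : (1:ℝ≥0∞) ≤ C := by
      have h1 : (1:ℝ≥0∞) ≤ volume S + 1 := le_add_self
      calc (1:ℝ≥0∞) = ((1:ℝ≥0∞) ^ (1 - q/2 : ℝ)) ^ (1/q : ℝ) := by
            rw [ENNReal.one_rpow, ENNReal.one_rpow]
        _ ≤ C := ENNReal.rpow_le_rpow (ENNReal.rpow_le_rpow h1 (by linarith)) (by positivity)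
    have hC0 : C ≠ 0 := by
      intro h
      rw [h] at hC1
      exact (not_le_of_gt zero_lt_one) hC1
    have hkey : ∀ w : (Fin d → ℝ) → ℝ,
        eLpNorm w (ENNReal.ofReal q) (volume.restrict Ω) / C ≤ GenPrior Ω S L N E Z J w := by
      intro w
      rw [GenPrior]
      refine le_iInf fun μ => le_iInf fun θ => le_iInf fun hfeas => ?_
      have hb := aux_feasible_bound Ω S hSo L hL N E hErange Z hq1 hq2 hfeas
      have hGc : (∑ n ∈ Finset.range (N 1), ENNReal.ofReal (Mnorm (μ 1 n)))
          ≤ Gcost Ω S L N E J μ θ := by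
        rw [Gcost]
        refine le_trans ?_ le_self_add
        exact Finset.single_le_sum (f := fun l => ∑ n ∈ Finset.range (N l),
          ENNReal.ofReal (Mnorm (μ l n))) (fun i _ => zero_le)
          (Finset.mem_Icc.mpr ⟨le_refl 1, hL⟩)
      refine ENNReal.div_le_of_le_mul ?_
      calc eLpNorm w (ENNReal.ofReal q) (volume.restrict Ω)
          ≤ C * ∑ n ∈ Finset.range (N 1), ENNReal.ofReal (Mnorm (μ 1 n)) := hb
        _ ≤ C * Gcost Ω S L N E J μ θ := mul_le_mul_right hGc _
        _ = Gcost Ω S L N E J μ θ * C := mul_comm _ _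
    have htop : Tendsto (fun m => eLpNorm (v m) (ENNReal.ofReal q) (volume.restrict Ω))
        atTop (𝓝 ⊤) := by
      have h1 : Tendsto (fun m => ENNReal.ofReal
          ((eLpNorm (v m) (ENNReal.ofReal q) (volume.restrict Ω)).toReal)) atTop (𝓝 ⊤) :=
        ENNReal.tendsto_ofReal_atTop.comp hvnorm
      refine h1.congr fun m => ?_
      rw [ENNReal.ofReal_toReal (hvmem m).2.ne]
    have hdiv : Tendsto
        (fun m => eLpNorm (v m) (ENNReal.ofReal q) (volume.restrict Ω) / C) atTop (𝓝 ⊤) := by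
      have h2 := ENNReal.Tendsto.mul_const (b := C⁻¹) htop (Or.inl (by simp))
      rw [ENNReal.top_mul (ENNReal.inv_ne_zero.mpr hCtop)] at h2
      simpa [div_eq_mul_inv] using h2
    exact tendsto_nhds_top_mono hdiv (Filter.Eventually.of_forall fun m => hkey (v m))
end

section
/- Convergence of individual terms along weakly convergent minimizing subsequences: In the stability theorem, if (u_{m_k}, v_{m_k}) ⇀ (u,v) weakly in L^q(Ω)² and E_{y_{m_k}}(u_{m_k},v_{m_k}) → min E_y < ∞, then (u,v) minimizes E_y and additionally D_{y_{m_k}}(Au_{m_k}) → D_y(Au), R(u_{m_k} − v_{m_k}) → R(u − v), and G(v_{m_k}) → G(v). -/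
open MeasureTheory Filter Topology

/-- Sequential weak convergence in a normed space, tested against all continuous linear
functionals. -/
def WSeqConv {X : Type*} [NormedAddCommGroup X] [NormedSpace ℝ X]
    (u : ℕ → X) (u₀ : X) : Prop :=
  ∀ f : X →L[ℝ] ℝ, Tendsto (fun m => f (u m)) atTop (𝓝 (f u₀))


lemma aux_le_liminf_add {α : Type*} {f : Filter α} {u v : α → ENNReal} :
    liminf u f + liminf v f ≤ liminf (fun x => u x + v x) f := by
  rcases eq_or_ne (liminf u f) 0 with h0 | h0
  · rw [h0, zero_add]
    exact liminf_le_liminf (Eventually.of_forall fun x => le_add_self)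
  rcases eq_or_ne (liminf v f) 0 with h0' | h0'
  · rw [h0', add_zero]
    exact liminf_le_liminf (Eventually.of_forall fun x => le_self_add)
  refine le_of_forall_lt fun e he => ?_
  obtain ⟨a, ha, b, hb, hab⟩ := ENNReal.exists_lt_add_of_lt_add he h0 h0'
  refine hab.trans_le (le_liminf_of_le (by isBoundedDefault) ?_)
  filter_upwards [eventually_lt_of_lt_liminf ha, eventually_lt_of_lt_liminf hb] with x hx hy
  exact add_le_add hx.le hy.le

lemma aux_le_limsup_add {α : Type*} {f : Filter α} [f.NeBot] {u v : α → ENNReal} :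
    limsup u f + liminf v f ≤ limsup (fun x => u x + v x) f := by
  rcases eq_or_ne (limsup u f) 0 with h0 | h0
  · rw [h0, zero_add]
    exact (liminf_le_liminf (Eventually.of_forall fun x => (le_add_self : v x ≤ u x + v x))).trans
      (liminf_le_limsup)
  rcases eq_or_ne (liminf v f) 0 with h0' | h0'
  · rw [h0', add_zero]
    exact limsup_le_limsup (Eventually.of_forall fun x => le_self_add)
  refine le_of_forall_lt fun e he => ?_
  obtain ⟨a, ha, b, hb, hab⟩ := ENNReal.exists_lt_add_of_lt_add he h0 h0'
  refine hab.trans_le (le_limsup_of_frequently_le ?_)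
  exact ((frequently_lt_of_lt_limsup (by isBoundedDefault) ha).and_eventually
    (eventually_lt_of_lt_liminf hb)).mono fun x hx => add_le_add hx.1.le hx.2.le

lemma aux_const_mul_liminf {s : ENNReal} {x : ℕ → ENNReal} {x₀ : ENNReal}
    (hx : x₀ ≤ liminf x atTop) : s * x₀ ≤ liminf (fun k => s * x k) atTop := by
  calc s * x₀ ≤ s * liminf x atTop := mul_le_mul_right hx _
    _ = liminf (fun _ : ℕ => s) atTop * liminf x atTop := by rw [liminf_const]
    _ ≤ liminf (fun k => s * x k) atTop := ENNReal.le_liminf_mul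

/-- Convergence of the individual energy terms along weakly convergent minimizing
subsequences (Theorem 2.13, final part). -/
theorem stmt_15
    -- X = L^q(Ω) with q ∈ (1,2], Ω ⊂ ℝ^d a bounded domain
    {d : ℕ} (Ω : Set (Fin d → ℝ)) (hΩo : IsOpen Ω) (hΩb : Bornology.IsBounded Ω)
    (q : ℝ) (hq1 : 1 < q) (hq2 : q ≤ 2) [Fact (1 ≤ ENNReal.ofReal q)]
    {Y : Type*} [NormedAddCommGroup Y] [NormedSpace ℝ Y] [CompleteSpace Y]
    -- the forward operator
    (A : Lp ℝ (ENNReal.ofReal q) (volume.restrict Ω) →L[ℝ] Y)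
    -- the data-fidelity term: proper, coercive, weakly lsc, convex
    (D : Y → ENNReal)
    (hDproper : ∃ z, D z ≠ ⊤)
    (hDcoercive : ∀ z : ℕ → Y, Tendsto (fun m => ‖z m‖) atTop atTop →
      Tendsto (fun m => D (z m)) atTop (𝓝 ⊤))
    (hDlsc : ∀ (z : ℕ → Y) (z₀ : Y), WSeqConv z z₀ →
      D z₀ ≤ Filter.liminf (fun m => D (z m)) atTop)
    (hDconvex : ∀ (z w : Y) (t : ℝ), 0 ≤ t → t ≤ 1 →
      D (t • z + (1 - t) • w) ≤ ENNReal.ofReal t * D z + ENNReal.ofReal (1 - t) * D w)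
    -- the generative prior: proper, coercive, weakly lsc
    (G : Lp ℝ (ENNReal.ofReal q) (volume.restrict Ω) → ENNReal)
    (hGproper : ∃ v, G v ≠ ⊤)
    (hGcoercive : ∀ v : ℕ → Lp ℝ (ENNReal.ofReal q) (volume.restrict Ω),
      Tendsto (fun m => ‖v m‖) atTop atTop → Tendsto (fun m => G (v m)) atTop (𝓝 ⊤))
    (hGlsc : ∀ (v : ℕ → Lp ℝ (ENNReal.ofReal q) (volume.restrict Ω)) v₀,
      WSeqConv v v₀ → G v₀ ≤ Filter.liminf (fun m => G (v m)) atTop)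
    -- the second regularizer: proper, weakly lsc
    (R : Lp ℝ (ENNReal.ofReal q) (volume.restrict Ω) → ENNReal)
    (hRproper : ∃ u, R u ≠ ⊤)
    (hRlsc : ∀ (u : ℕ → Lp ℝ (ENNReal.ofReal q) (volume.restrict Ω)) u₀,
      WSeqConv u u₀ → R u₀ ≤ Filter.liminf (fun m => R (u m)) atTop)
    -- the closed subspace U of invariance of R, with continuous projection P_U
    (U : Submodule ℝ (Lp ℝ (ENNReal.ofReal q) (volume.restrict Ω)))
    (hUclosed : IsClosed (U : Set (Lp ℝ (ENNReal.ofReal q) (volume.restrict Ω))))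
    (hRinv : ∀ u, ∀ w ∈ U, R (u + w) = R u)
    (PU : Lp ℝ (ENNReal.ofReal q) (volume.restrict Ω) →L[ℝ]
      Lp ℝ (ENNReal.ofReal q) (volume.restrict Ω))
    (hPUrange : ∀ u, PU u ∈ U) (hPUproj : ∀ u ∈ U, PU u = u)
    (C : ℝ) (hC : 0 < C)
    (hPoincare : ∀ u, ENNReal.ofReal ‖u - PU u‖ ≤ ENNReal.ofReal C * R u)
    -- Z is a complement of U ∩ ker A in U, on which A is bounded below
    (Zc : Submodule ℝ (Lp ℝ (ENNReal.ofReal q) (volume.restrict Ω)))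
    (hZU : Zc ≤ U)
    (hZdisj : Zc ⊓ (U ⊓ LinearMap.ker (A : Lp ℝ (ENNReal.ofReal q) (volume.restrict Ω) →ₗ[ℝ] Y)) = ⊥)
    (hZsup : Zc ⊔ (U ⊓ LinearMap.ker (A : Lp ℝ (ENNReal.ofReal q) (volume.restrict Ω) →ₗ[ℝ] Y)) = U)
    (D₀ : ℝ) (hD₀ : 0 < D₀) (hAbelow : ∀ u ∈ Zc, ‖u‖ ≤ D₀ * ‖A u‖)
    -- the positive weights
    (lam sR sG : ENNReal) (hlam : 0 < lam) (hlam' : lam ≠ ⊤)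
    (hsR : 0 < sR) (hsR' : sR ≠ ⊤) (hsG : 0 < sG) (hsG' : sG ≠ ⊤)
    -- the perturbed data terms D_{y_m}, converging to D
    (Dm : ℕ → Y → ENNReal)
    (hDm1 : ∀ (z : ℕ → Y) (z₀ : Y), WSeqConv z z₀ →
      D z₀ ≤ Filter.liminf (fun m => Dm m (z m)) atTop)
    (hDm2 : ∀ z : Y, Filter.limsup (fun m => Dm m z) atTop ≤ D z)
    -- equi-coercivity of (D_{y_m})
    (hequi : ∃ D₀' : Y → ENNReal,
      (∀ z : ℕ → Y, Tendsto (fun m => ‖z m‖) atTop atTop →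
        Tendsto (fun m => D₀' (z m)) atTop (𝓝 ⊤)) ∧
      ∀ m z, D₀' z ≤ Dm m z)
    -- (u_m, v_m) minimizes the perturbed energy E_{y_m}
    (u v : ℕ → Lp ℝ (ENNReal.ofReal q) (volume.restrict Ω))
    (hmin : ∀ m, ∀ u' v' : Lp ℝ (ENNReal.ofReal q) (volume.restrict Ω),
      lam * Dm m (A (u m)) + sR * R (u m - v m) + sG * G (v m) ≤
        lam * Dm m (A u') + sR * R (u' - v') + sG * G v')
    -- c = min E_y is attained and finite, and the minimal perturbed energies converge to c
    (c : ENNReal) (hc : c ≠ ⊤)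
    (hcmin : IsLeast (Set.range (fun p : (Lp ℝ (ENNReal.ofReal q) (volume.restrict Ω)) ×
      (Lp ℝ (ENNReal.ofReal q) (volume.restrict Ω)) =>
        lam * D (A p.1) + sR * R (p.1 - p.2) + sG * G p.2)) c)
    (henergy : Tendsto
      (fun m => lam * Dm m (A (u m)) + sR * R (u m - v m) + sG * G (v m)) atTop (𝓝 c))
    -- a weakly convergent subsequence of the minimizers
    (φ : ℕ → ℕ) (hφ : StrictMono φ)
    (ustar vstar : Lp ℝ (ENNReal.ofReal q) (volume.restrict Ω))
    (hu : WSeqConv (fun k => u (φ k)) ustar) (hv : WSeqConv (fun k => v (φ k)) vstar) :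
    -- the weak limit is a minimizer and each term converges individually
    lam * D (A ustar) + sR * R (ustar - vstar) + sG * G vstar = c ∧
    Tendsto (fun k => Dm (φ k) (A (u (φ k)))) atTop (𝓝 (D (A ustar))) ∧
    Tendsto (fun k => R (u (φ k) - v (φ k))) atTop (𝓝 (R (ustar - vstar))) ∧
    Tendsto (fun k => G (v (φ k))) atTop (𝓝 (G vstar)) := by
  classical
  -- weak convergence of derived sequences
  have huv : WSeqConv (fun k => u (φ k) - v (φ k)) (ustar - vstar) := by
    intro f
    have h := (hu f).sub (hv f)
    simpa [map_sub] using h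
  have hAu : WSeqConv (fun k => A (u (φ k))) (A ustar) := by
    intro f
    exact hu (f.comp A)
  -- interleaved sequence for the Dm lower bound
  set z : ℕ → Y := fun m => if m ∈ Set.range φ then A (u m) else A ustar with hzdef
  have hzφ : ∀ k, z (φ k) = A (u (φ k)) := fun k => by
    simp [hzdef, Set.mem_range_self]
  have hzc : WSeqConv z (A ustar) := by
    intro f
    rw [Metric.tendsto_atTop]
    intro ε hε
    obtain ⟨N, hN⟩ := (Metric.tendsto_atTop.1 (hAu f)) ε hε
    refine ⟨φ N, fun m hm => ?_⟩
    by_cases h : m ∈ Set.range φ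
    · obtain ⟨k, rfl⟩ := h
      have hk : N ≤ k := hφ.le_iff_le.1 hm
      simpa [hzdef, Set.mem_range_self] using hN k hk
    · have hz2 : z m = A ustar := by
        simp only [hzdef]
        exact if_neg h
      rw [hz2]
      simpa using hε
  have hlD : D (A ustar) ≤ liminf (fun k => Dm (φ k) (A (u (φ k)))) atTop := by
    refine (hDm1 z (A ustar) hzc).trans ?_
    have hmap : map φ atTop ≤ (atTop : Filter ℕ) := hφ.tendsto_atTop
    have h1 : liminf (fun m => Dm m (z m)) atTop
        ≤ liminf (fun m => Dm m (z m)) (map φ atTop) :=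
      liminf_le_liminf_of_le hmap
    have h2 : liminf (fun m => Dm m (z m)) (map φ atTop)
        = liminf (fun k => Dm (φ k) (z (φ k))) atTop := by
      rw [Filter.liminf, Filter.liminf, Filter.map_map]
      rfl
    rw [h2] at h1
    refine h1.trans (le_of_eq ?_)
    congr 1
    funext k
    rw [hzφ]
  -- the three terms along the subsequence
  set ak : ℕ → ENNReal := fun k => lam * Dm (φ k) (A (u (φ k))) with hakdef
  set bk : ℕ → ENNReal := fun k => sR * R (u (φ k) - v (φ k)) with hbkdef
  set ck : ℕ → ENNReal := fun k => sG * G (v (φ k)) with hckdef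
  have hS : Tendsto (fun k => ak k + bk k + ck k) atTop (𝓝 c) := by
    have h := henergy.comp hφ.tendsto_atTop
    exact h
  have hliminfS : liminf (fun k => ak k + bk k + ck k) atTop = c := hS.liminf_eq
  have hlimsupS : limsup (fun k => ak k + bk k + ck k) atTop = c := hS.limsup_eq
  -- liminf lower bounds
  have la : lam * D (A ustar) ≤ liminf ak atTop := aux_const_mul_liminf hlD
  have lb : sR * R (ustar - vstar) ≤ liminf bk atTop :=
    aux_const_mul_liminf (hRlsc _ _ huv)
  have lc : sG * G vstar ≤ liminf ck atTop := aux_const_mul_liminf (hGlsc _ _ hv)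
  -- the limit is a minimizer
  have hupper : lam * D (A ustar) + sR * R (ustar - vstar) + sG * G vstar ≤ c := by
    calc lam * D (A ustar) + sR * R (ustar - vstar) + sG * G vstar
        ≤ liminf ak atTop + liminf bk atTop + liminf ck atTop :=
          add_le_add (add_le_add la lb) lc
      _ ≤ liminf (fun k => ak k + bk k) atTop + liminf ck atTop :=
          add_le_add_left aux_le_liminf_add _
      _ ≤ liminf (fun k => ak k + bk k + ck k) atTop := aux_le_liminf_add
      _ = c := hliminfS
  have hlower : c ≤ lam * D (A ustar) + sR * R (ustar - vstar) + sG * G vstar :=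
    hcmin.2 ⟨(ustar, vstar), rfl⟩
  have hEq : lam * D (A ustar) + sR * R (ustar - vstar) + sG * G vstar = c :=
    le_antisymm hupper hlower
  -- finiteness of each term
  have hDle : lam * D (A ustar) ≤ c := hEq ▸ (le_self_add.trans le_self_add)
  have hRle : sR * R (ustar - vstar) ≤ c := hEq ▸ ((le_add_self (a := sR * R (ustar - vstar))
    (b := lam * D (A ustar))).trans le_self_add)
  have hGle : sG * G vstar ≤ c := hEq ▸ le_add_self
  have hDne : lam * D (A ustar) ≠ ⊤ := ne_top_of_le_ne_top hc hDle
  have hRne : sR * R (ustar - vstar) ≠ ⊤ := ne_top_of_le_ne_top hc hRle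
  have hGne : sG * G vstar ≠ ⊤ := ne_top_of_le_ne_top hc hGle
  -- key cancellation lemma for limsup upper bounds
  have key : ∀ (x y w : ℕ → ENNReal) (x₀ y₀ w₀ : ENNReal),
      (∀ k, x k + y k + w k = ak k + bk k + ck k) → x₀ + y₀ + w₀ = c →
      y₀ ≤ liminf y atTop → w₀ ≤ liminf w atTop → y₀ ≠ ⊤ → w₀ ≠ ⊤ →
      limsup x atTop ≤ x₀ := by
    intro x y w x₀ y₀ w₀ hsum hsum0 hy hw hyT hwT
    have h1 : limsup x atTop + (liminf y atTop + liminf w atTop)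
        ≤ limsup (fun k => x k + (y k + w k)) atTop :=
      le_trans (add_le_add_right aux_le_liminf_add _) aux_le_limsup_add
    have h2 : (fun k => x k + (y k + w k)) = fun k => ak k + bk k + ck k := by
      funext k
      rw [← hsum k, add_assoc]
    rw [h2, hlimsupS] at h1
    have h3 : limsup x atTop + (y₀ + w₀) ≤ x₀ + (y₀ + w₀) := by
      refine le_trans (add_le_add_right (add_le_add hy hw) _) (h1.trans ?_)
      rw [← hsum0, add_assoc]
    exact (ENNReal.add_le_add_iff_right (ENNReal.add_ne_top.2 ⟨hyT, hwT⟩)).1 h3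
  -- limsup upper bounds
  have hsa : limsup ak atTop ≤ lam * D (A ustar) :=
    key ak bk ck _ _ _ (fun k => rfl) hEq lb lc hRne hGne
  have hsb : limsup bk atTop ≤ sR * R (ustar - vstar) :=
    key bk ak ck _ _ _ (fun k => by ring) (by rw [← hEq]; ring) la lc hDne hGne
  have hsc : limsup ck atTop ≤ sG * G vstar :=
    key ck ak bk _ _ _ (fun k => by ring) (by rw [← hEq]; ring) la lb hDne hRne
  -- convergence of the weighted terms
  have hta : Tendsto ak atTop (𝓝 (lam * D (A ustar))) :=
    tendsto_of_le_liminf_of_limsup_le la hsa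
  have htb : Tendsto bk atTop (𝓝 (sR * R (ustar - vstar))) :=
    tendsto_of_le_liminf_of_limsup_le lb hsb
  have htc : Tendsto ck atTop (𝓝 (sG * G vstar)) :=
    tendsto_of_le_liminf_of_limsup_le lc hsc
  -- divide out the positive finite weights
  have unscale : ∀ (s : ENNReal), 0 < s → s ≠ ⊤ → ∀ (x : ℕ → ENNReal) (x₀ : ENNReal),
      Tendsto (fun k => s * x k) atTop (𝓝 (s * x₀)) → Tendsto x atTop (𝓝 x₀) := by
    intro s hs hs' x x₀ hx
    have h := ENNReal.Tendsto.const_mul (a := s⁻¹) hx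
      (Or.inr (ENNReal.inv_ne_top.2 hs.ne'))
    simpa only [← mul_assoc, ENNReal.inv_mul_cancel hs.ne' hs', one_mul] using h
  refine ⟨hEq, ?_, ?_, ?_⟩
  · exact unscale lam hlam hlam' _ _ hta
  · exact unscale sR hsR hsR' _ _ htb
  · exact unscale sG hsG hsG' _ _ htc
end
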